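/- For every integer ν ≥ 1 the characteristic polynomial of B_N satisfies: det(λI_N − B_N) = (λ² − 1)^ν if N = 2ν, and det(λI_N − B_N) = λ(λ² − 1)^ν if N = 2ν + 1. Consequently, for N ≥ 2 the spectrum (set of eigenvalues) of B_N is {−1, 1} if N is even, and {−1, 0, 1} if N is odd. -/

import Mathlib

set_option maxHeartbeats 1000000

open Matrix Finset

/-- The `N × N` real matrix `B_N` with entries `(B_N)_{jm} = (−1)^{m+1} sign(m − j)`,
for 1-based indices `j, m ∈ {1, …, N}` (here realised with 0-based `Fin N` indices). -/
noncomputable def matB (N : ℕ) : Matrix (Fin N) (Fin N) ℝ := fun j m =>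
  (-1 : ℝ) ^ (((m : ℕ) + 1) + 1) *
    Real.sign ((((m : ℕ) + 1 : ℕ) : ℝ) - (((j : ℕ) + 1 : ℕ) : ℝ))

namespace BNaux

lemma matB_apply (N : ℕ) (j m : Fin N) :
    matB N j m = (-1 : ℝ) ^ (m : ℕ) *
      (if (j : ℕ) < (m : ℕ) then 1 else if (m : ℕ) < (j : ℕ) then -1 else 0) := by
  unfold matB
  have h2 : ((-1 : ℝ)) ^ (((m : ℕ) + 1) + 1) = (-1) ^ (m : ℕ) := by
    rw [pow_succ, pow_succ]; ring
  rw [h2]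
  congr 1
  rcases lt_trichotomy (j : ℕ) (m : ℕ) with h | h | h
  · rw [if_pos h, Real.sign_of_pos]
    have : ((j:ℕ):ℝ) < ((m:ℕ):ℝ) := by exact_mod_cast h
    push_cast
    linarith
  · rw [if_neg (by omega), if_neg (by omega), h]
    simp
  · rw [if_neg (by omega), if_pos h, Real.sign_of_neg]
    have : ((m:ℕ):ℝ) < ((j:ℕ):ℝ) := by exact_mod_cast h
    push_cast
    linarith


lemma M_apply (n : ℕ) (l : ℝ) (i m : Fin (n+1)) :
    (l • (1 : Matrix (Fin (n+1)) (Fin (n+1)) ℝ) - matB (n+1)) i m =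
      (if (i : ℕ) = (m : ℕ) then l else 0) -
        (-1 : ℝ) ^ (m : ℕ) *
          (if (i : ℕ) < (m : ℕ) then 1 else if (m : ℕ) < (i : ℕ) then -1 else 0) := by
  rw [Matrix.sub_apply, Matrix.smul_apply, Matrix.one_apply, matB_apply]
  have hiff : (i = m) ↔ ((i:ℕ) = (m:ℕ)) := Fin.ext_iff
  by_cases h : i = m
  · rw [if_pos h, if_pos (hiff.mp h)]; simp
  · rw [if_neg h, if_neg (fun hv => h (hiff.mpr hv))]; simp

def T (n : ℕ) : Matrix (Fin (n+1)) (Fin (n+1)) ℝ := fun i k =>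
  if (i : ℕ) = (k : ℕ) then 1 else if (k : ℕ) + 1 = (i : ℕ) then -1 else 0

def U (n : ℕ) : Matrix (Fin (n+1)) (Fin (n+1)) ℝ := fun k m =>
  if (k : ℕ) ≤ (m : ℕ) then 1 else 0

def R (n : ℕ) (l : ℝ) : Matrix (Fin (n+1)) (Fin (n+1)) ℝ := fun i m =>
  if (i : ℕ) = 0 then (if (m : ℕ) = 0 then l else (-1 : ℝ) ^ ((m : ℕ) + 1))
  else (l - (-1 : ℝ) ^ ((i : ℕ) - 1)) *
    ((if (m : ℕ) = (i : ℕ) then 1 else 0) - (if (m : ℕ) + 1 = (i : ℕ) then 1 else 0))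

def F (n : ℕ) (l : ℝ) : Matrix (Fin (n+1)) (Fin (n+1)) ℝ := fun i m =>
  if (i : ℕ) = 0 then (l + if (m : ℕ) % 2 = 1 then 1 else 0)
  else if (m : ℕ) + 1 = (i : ℕ) then -(l - (-1 : ℝ) ^ (m : ℕ)) else 0

lemma fin_sum_ite {n : ℕ} (a : Fin n) (f : Fin n → ℝ) :
    (∑ k : Fin n, if (k : ℕ) = (a : ℕ) then f k else 0) = f a := by
  have h : ∀ k : Fin n, (if (k : ℕ) = (a : ℕ) then f k else 0) =
      if k = a then f k else 0 := fun k => by simp [Fin.ext_iff]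
  simp_rw [h]
  simp

lemma T_mul (n : ℕ) (l : ℝ) :
    T n * (l • (1 : Matrix (Fin (n+1)) (Fin (n+1)) ℝ) - matB (n+1)) = R n l := by
  ext i m
  rw [Matrix.mul_apply]
  induction i using Fin.cases with
  | zero =>
      have h1 : ∀ k : Fin (n+1), T n 0 k *
          (l • (1 : Matrix (Fin (n+1)) (Fin (n+1)) ℝ) - matB (n+1)) k m =
          if (k : ℕ) = ((0 : Fin (n+1)) : ℕ) then
            (l • (1 : Matrix (Fin (n+1)) (Fin (n+1)) ℝ) - matB (n+1)) k m else 0 := by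
        intro k
        unfold T
        split_ifs with h h' <;> simp only [Fin.val_zero] at * <;> simp_all <;> omega
      rw [Finset.sum_congr rfl fun k _ => h1 k, fin_sum_ite]
      rw [M_apply, R]
      simp only [Fin.val_zero, pow_succ]
      by_cases h : (m : ℕ) = 0
      · rw [h]; split_ifs <;> first | (exfalso; omega) | ring1 | simp
      · split_ifs <;> first | (exfalso; omega) | ring1 | simp [Ne.symm h, Nat.pos_of_ne_zero h]
  | succ j =>
      have h1 : ∀ k : Fin (n+1), T n j.succ k *
          (l • (1 : Matrix (Fin (n+1)) (Fin (n+1)) ℝ) - matB (n+1)) k m =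
          (if (k : ℕ) = (j.succ : ℕ) then
            (l • (1 : Matrix (Fin (n+1)) (Fin (n+1)) ℝ) - matB (n+1)) k m else 0) -
          (if (k : ℕ) = (j.castSucc : ℕ) then
            (l • (1 : Matrix (Fin (n+1)) (Fin (n+1)) ℝ) - matB (n+1)) k m else 0) := by
        intro k
        unfold T
        simp only [Fin.val_succ, Fin.coe_castSucc]
        split_ifs <;> first | (exfalso; omega) | ring1 | exact (False.elim (by assumption))
      rw [Finset.sum_congr rfl fun k _ => h1 k, Finset.sum_sub_distrib,
        fin_sum_ite, fin_sum_ite]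
      rw [M_apply, M_apply, R]
      simp only [Fin.val_succ, Fin.coe_castSucc, Nat.succ_ne_zero, if_neg (Nat.succ_ne_zero _),
        Nat.add_sub_cancel]
      by_cases h1 : (m : ℕ) = (j : ℕ)
      · rw [h1]; split_ifs <;> first | (exfalso; omega) | ring1 | exact (False.elim (by assumption))
      · by_cases h2 : (m : ℕ) = (j : ℕ) + 1
        · rw [h2, pow_succ]; split_ifs <;> first | (exfalso; omega) | ring1 | exact (False.elim (by assumption))
        · split_ifs <;> first | (exfalso; omega) | ring1 | exact (False.elim (by assumption))

lemma sum_row0 (l : ℝ) (m : ℕ) :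
    (∑ k ∈ Finset.range (m+1), if k = 0 then l else (-1 : ℝ) ^ (k+1)) =
      l + if m % 2 = 1 then 1 else 0 := by
  induction m with
  | zero => simp
  | succ m ih =>
      rw [Finset.sum_range_succ, ih]
      rcases Nat.even_or_odd m with h | h
      · have h1 : m % 2 = 0 := Nat.even_iff.mp h
        have h2 : (m+1) % 2 = 1 := by omega
        have h3 : (-1 : ℝ) ^ (m+1+1) = 1 := by
          have : Even (m+1+1) := by rcases h with ⟨c, hc⟩; exact ⟨c+1, by omega⟩
          exact this.neg_one_pow
        rw [h1, h2, h3, if_neg (by omega), if_pos rfl]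
        simp [Nat.succ_ne_zero]
      · have h1 : m % 2 = 1 := Nat.odd_iff.mp h
        have h2 : (m+1) % 2 = 0 := by omega
        have h3 : (-1 : ℝ) ^ (m+1+1) = -1 := by
          have : Odd (m+1+1) := by rcases h with ⟨c, hc⟩; exact ⟨c+1, by omega⟩
          exact this.neg_one_pow
        rw [h1, h2, h3, if_pos rfl, if_neg (by omega)]
        simp [Nat.succ_ne_zero]

lemma fin_sum_le (n : ℕ) (m : Fin (n+1)) (g : ℕ → ℝ) :
    (∑ k : Fin (n+1), if (k : ℕ) ≤ (m : ℕ) then g (k : ℕ) else 0) =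
      ∑ x ∈ Finset.range ((m : ℕ)+1), g x := by
  rw [Fin.sum_univ_eq_sum_range (fun x => if x ≤ (m : ℕ) then g x else 0) (n+1)]
  have hsub : Finset.range ((m : ℕ)+1) ⊆ Finset.range (n+1) :=
    Finset.range_subset_range.mpr (by omega)
  rw [← Finset.sum_subset hsub (fun x _ hx => by
    rw [if_neg (by simp at hx ⊢; omega)])]
  exact Finset.sum_congr rfl (fun x hx => by rw [if_pos (by simp at hx; omega)])

lemma R_mul_U (n : ℕ) (l : ℝ) : R n l * U n = F n l := by
  ext i m
  rw [Matrix.mul_apply]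
  induction i using Fin.cases with
  | zero =>
      have h1 : ∀ k : Fin (n+1), R n l 0 k * U n k m =
          if (k : ℕ) ≤ (m : ℕ) then (if (k : ℕ) = 0 then l else (-1 : ℝ) ^ ((k : ℕ)+1)) else 0 := by
        intro k
        unfold R U
        rw [if_pos (Fin.val_zero (n+1))]
        split_ifs <;> ring1
      rw [Finset.sum_congr rfl fun k _ => h1 k]
      rw [fin_sum_le n m (fun x => if x = 0 then l else (-1 : ℝ) ^ (x+1))]
      rw [sum_row0]
      unfold F
      rw [if_pos (Fin.val_zero (n+1))]
  | succ j =>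
      have h1 : ∀ k : Fin (n+1), R n l j.succ k * U n k m =
          (if (k : ℕ) = (j.succ : ℕ) then
            (if (j : ℕ) + 1 ≤ (m : ℕ) then (l - (-1 : ℝ) ^ (j : ℕ)) else 0) else 0) -
          (if (k : ℕ) = (j.castSucc : ℕ) then
            (if (j : ℕ) ≤ (m : ℕ) then (l - (-1 : ℝ) ^ (j : ℕ)) else 0) else 0) := by
        intro k
        unfold R U
        simp only [Fin.val_succ, Fin.coe_castSucc, Nat.add_sub_cancel]
        split_ifs <;> first | (exfalso; omega) | ring1 | exact (False.elim (by assumption))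
      rw [Finset.sum_congr rfl fun k _ => h1 k, Finset.sum_sub_distrib,
        fin_sum_ite, fin_sum_ite]
      unfold F
      simp only [Fin.val_succ, Fin.coe_castSucc]
      rw [if_neg (Nat.succ_ne_zero _)]
      by_cases h : (m : ℕ) = (j : ℕ)
      · rw [h]
        split_ifs <;> first | (exfalso; omega) | ring1
      · split_ifs <;> first | (exfalso; omega) | ring1

lemma det_T (n : ℕ) : (T n).det = 1 := by
  rw [Matrix.det_of_lowerTriangular (T n) (fun i k h => by
    have h' : (i : ℕ) < (k : ℕ) := h
    unfold T
    rw [if_neg (by omega), if_neg (by omega)])]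
  have : ∀ i : Fin (n+1), T n i i = 1 := fun i => by unfold T; rw [if_pos rfl]
  simp [this]

lemma det_U (n : ℕ) : (U n).det = 1 := by
  rw [Matrix.det_of_upperTriangular (show (U n).BlockTriangular id from fun i k h => by
    have h' : (k : ℕ) < (i : ℕ) := h
    unfold U
    rw [if_neg (by omega)])]
  have : ∀ i : Fin (n+1), U n i i = 1 := fun i => by unfold U; rw [if_pos le_rfl]
  simp [this]

lemma sigma_val (n : ℕ) (m : Fin (n+1)) :
    (((finRotate (n+1)).symm m : Fin (n+1)) : ℕ) =
      if (m : ℕ) = 0 then n else (m : ℕ) - 1 := by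
  set t := (finRotate (n+1)).symm m with ht
  have h : finRotate (n+1) t = m := Equiv.apply_symm_apply _ m
  rw [finRotate_succ_apply] at h
  have hv := Fin.val_add_one t
  rw [h] at hv
  by_cases hl : t = Fin.last n
  · rw [if_pos hl] at hv
    rw [hv, if_pos rfl, hl, Fin.val_last]
  · rw [if_neg hl] at hv
    rw [if_neg (by omega)]
    omega

lemma det_F (n : ℕ) (l : ℝ) :
    (F n l).det = (l + if n % 2 = 1 then 1 else 0) *
      ∏ j ∈ Finset.range n, (l - (-1 : ℝ) ^ j) := by
  set σ : Equiv.Perm (Fin (n+1)) := ((finRotate (n+1)).symm : Equiv.Perm (Fin (n+1))) with hσ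
  have hσval : ∀ m : Fin (n+1), ((σ m : Fin (n+1)) : ℕ) =
      if (m : ℕ) = 0 then n else (m : ℕ) - 1 := fun m => sigma_val n m
  have hdet := Matrix.det_permute' σ (F n l)
  have htri : ((F n l).submatrix id σ).BlockTriangular id := by
    intro i m h
    have h' : (m : ℕ) < (i : ℕ) := h
    show F n l i (σ m) = 0
    unfold F
    rw [if_neg (by omega), if_neg (by rw [hσval m]; split_ifs <;> omega)]
  have hG : ((F n l).submatrix id σ).det =
      ∏ i : Fin (n+1), F n l i (σ i) := Matrix.det_of_upperTriangular htri
  have h0 : F n l 0 (σ 0) = (l + if n % 2 = 1 then 1 else 0) := by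
    unfold F
    rw [if_pos (Fin.val_zero (n+1)), hσval 0, Fin.val_zero, if_pos rfl]
  have hs : ∀ j : Fin n, F n l j.succ (σ j.succ) = -(l - (-1 : ℝ) ^ (j : ℕ)) := by
    intro j
    have hv : ((σ j.succ : Fin (n+1)) : ℕ) = (j : ℕ) := by
      rw [hσval j.succ, Fin.val_succ, if_neg (by omega)]
      omega
    unfold F
    rw [if_neg (show ¬((j.succ : Fin (n+1)) : ℕ) = 0 from by rw [Fin.val_succ]; omega), hv,
      if_pos (by rw [Fin.val_succ])]
  have hdiag : (∏ i : Fin (n+1), F n l i (σ i)) =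
      (l + if n % 2 = 1 then 1 else 0) *
        ∏ j ∈ Finset.range n, (-(l - (-1 : ℝ) ^ j)) := by
    rw [Fin.prod_univ_succ, h0]
    congr 1
    rw [← Fin.prod_univ_eq_prod_range (fun j => -(l - (-1 : ℝ) ^ j)) n]
    exact Finset.prod_congr rfl (fun j _ => hs j)
  have hsign : ((Equiv.Perm.sign σ : ℤ) : ℝ) = (-1 : ℝ) ^ n := by
    have h1 : Equiv.Perm.sign σ = Equiv.Perm.sign (finRotate (n+1)) := by
      rw [hσ]
      exact Equiv.Perm.sign_symm _
    rw [h1, sign_finRotate]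
    simp
  have hneg : (∏ j ∈ Finset.range n, (-(l - (-1 : ℝ) ^ j))) =
      (-1 : ℝ) ^ n * ∏ j ∈ Finset.range n, (l - (-1 : ℝ) ^ j) := by
    rw [Finset.prod_congr rfl
      (fun j _ => show -(l - (-1:ℝ)^j) = (-1) * (l - (-1:ℝ)^j) by ring),
      Finset.prod_mul_distrib, Finset.prod_const, Finset.card_range]
  rw [hG, hdiag, hneg] at hdet
  rw [hsign] at hdet
  have hne : ((-1 : ℝ)^n) ≠ 0 := pow_ne_zero _ (by norm_num)
  apply mul_left_cancel₀ hne
  rw [← hdet]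
  ring

lemma master (n : ℕ) (l : ℝ) :
    (l • (1 : Matrix (Fin (n+1)) (Fin (n+1)) ℝ) - matB (n+1)).det =
      (l + if n % 2 = 1 then 1 else 0) * ∏ j ∈ Finset.range n, (l - (-1 : ℝ) ^ j) := by
  have h : (T n * (l • (1 : Matrix (Fin (n+1)) (Fin (n+1)) ℝ) - matB (n+1))) * U n = F n l := by
    rw [T_mul, R_mul_U]
  have hd := congrArg Matrix.det h
  rw [Matrix.det_mul, Matrix.det_mul, det_T, det_U, one_mul, mul_one] at hd
  rw [hd, det_F]

lemma prod2 (l : ℝ) (k : ℕ) :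
    (∏ j ∈ Finset.range (2*k), (l - (-1 : ℝ) ^ j)) = (l^2 - 1)^k := by
  induction k with
  | zero => simp
  | succ k ih =>
      have h2 : 2*(k+1) = (2*k)+1+1 := by ring
      rw [h2, Finset.prod_range_succ, Finset.prod_range_succ, ih]
      have he : (-1 : ℝ)^(2*k) = 1 := Even.neg_one_pow ⟨k, by ring⟩
      have ho : (-1 : ℝ)^(2*k+1) = -1 := Odd.neg_one_pow ⟨k, by ring⟩
      rw [he, ho]
      ring

lemma spec_eq (N : ℕ) (A : Matrix (Fin N) (Fin N) ℝ) :
    spectrum ℝ A = {l : ℝ | (l • (1 : Matrix (Fin N) (Fin N) ℝ) - A).det = 0} := by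
  ext l
  rw [spectrum.mem_iff, Set.mem_setOf_eq, Algebra.algebraMap_eq_smul_one]
  constructor
  · intro h
    by_contra hne
    exact h ((Matrix.isUnit_iff_isUnit_det _).mpr (isUnit_iff_ne_zero.mpr hne))
  · intro h hU
    exact (isUnit_iff_ne_zero.mp ((Matrix.isUnit_iff_isUnit_det _).mp hU)) h

end BNaux

/-- The characteristic polynomial of `B_N` is `(λ² − 1)^ν` for `N = 2ν` and
`λ(λ² − 1)^ν` for `N = 2ν + 1`; consequently the spectrum of `B_N` is `{−1, 1}` for
even `N ≥ 2` and `{−1, 0, 1}` for odd `N ≥ 3`. -/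
theorem matB_charpoly_and_spectrum (ν : ℕ) (hν : 1 ≤ ν) :
    (∀ l : ℝ,
      (l • (1 : Matrix (Fin (2 * ν)) (Fin (2 * ν)) ℝ) - matB (2 * ν)).det =
        (l ^ 2 - 1) ^ ν) ∧
    (∀ l : ℝ,
      (l • (1 : Matrix (Fin (2 * ν + 1)) (Fin (2 * ν + 1)) ℝ) - matB (2 * ν + 1)).det =
        l * (l ^ 2 - 1) ^ ν) ∧
    spectrum ℝ (matB (2 * ν)) = {-1, 1} ∧
    spectrum ℝ (matB (2 * ν + 1)) = {-1, 0, 1} := by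
  obtain ⟨k, rfl⟩ : ∃ k, ν = k + 1 := ⟨ν - 1, by omega⟩
  have heven : ∀ l : ℝ,
      (l • (1 : Matrix (Fin (2*(k+1))) (Fin (2*(k+1))) ℝ) - matB (2*(k+1))).det =
        (l ^ 2 - 1) ^ (k+1) := by
    intro l
    show (l • (1 : Matrix (Fin ((2*k+1)+1)) (Fin ((2*k+1)+1)) ℝ) - matB ((2*k+1)+1)).det =
      (l ^ 2 - 1) ^ (k+1)
    rw [BNaux.master (2*k+1) l, if_pos (by omega), Finset.prod_range_succ, BNaux.prod2]
    have he : (-1 : ℝ)^(2*k) = 1 := Even.neg_one_pow ⟨k, by ring⟩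
    rw [he]
    ring
  have hodd : ∀ l : ℝ,
      (l • (1 : Matrix (Fin (2*(k+1)+1)) (Fin (2*(k+1)+1)) ℝ) - matB (2*(k+1)+1)).det =
        l * (l ^ 2 - 1) ^ (k+1) := by
    intro l
    rw [BNaux.master (2*(k+1)) l, if_neg (by omega), BNaux.prod2]
    ring
  refine ⟨heven, hodd, ?_, ?_⟩
  · rw [BNaux.spec_eq]
    ext x
    simp only [Set.mem_setOf_eq, heven x, Set.mem_insert_iff, Set.mem_singleton_iff]
    rw [pow_eq_zero_iff (Nat.succ_ne_zero k)]
    have hfac : x ^ 2 - 1 = (x - 1) * (x + 1) := by ring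
    rw [hfac, mul_eq_zero, sub_eq_zero, add_eq_zero_iff_eq_neg]
    tauto
  · rw [BNaux.spec_eq]
    ext x
    simp only [Set.mem_setOf_eq, hodd x, Set.mem_insert_iff, Set.mem_singleton_iff]
    rw [mul_eq_zero, pow_eq_zero_iff (Nat.succ_ne_zero k)]
    have hfac : x ^ 2 - 1 = (x - 1) * (x + 1) := by ring
    rw [hfac, mul_eq_zero, sub_eq_zero, add_eq_zero_iff_eq_neg]
    tauto
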